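/- Let 𝒟 ⊆ 𝒞 and let ρ : 𝒞 → 𝒟 be a locally Lipschitz retraction (i.e. ρ is continuous, locally Lipschitz, and ρ(φ) = φ for all φ ∈ 𝒟) such that for all φ₀ ∈ 𝒞, δ > 0 and R > 0 one has sup{ lip ρ(φ) : φ ∈ V(φ₀;δ,R) } < ∞. Then, if f : 𝒟 → ℝⁿ is almost locally Lipschitz, so is F := f ∘ ρ : 𝒞 → ℝⁿ. -/
import Mathlib


open scoped ENNReal

noncomputable section

/-- The state space 𝒞 = C([-h,0], ℝⁿ) with the sup-norm. -/
abbrev Hist (h : ℝ) (n : ℕ) : Type :=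
  C(Set.Icc (-h) (0:ℝ), Fin n → ℝ)

/-- The segment x_t ∈ 𝒞 of a continuous function x : ℝ → ℝⁿ, x_t(θ) = x(t+θ). -/
def seg {h : ℝ} {n : ℕ} (x : C(ℝ, Fin n → ℝ)) (t : ℝ) : Hist h n :=
  ⟨fun θ => x (t + θ.1), x.continuous.comp (continuous_const.add continuous_subtype_val)⟩

/-- `LipBdd R φ` means `lip φ ≤ R`, i.e. φ is R-Lipschitz. -/
def LipBdd {h : ℝ} {n : ℕ} (R : ℝ) (φ : Hist h n) : Prop :=
  ∀ s t : Set.Icc (-h) (0:ℝ), ‖φ s - φ t‖ ≤ R * |s.1 - t.1|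

/-- `lip φ < ∞`. -/
def LipFin {h : ℝ} {n : ℕ} (φ : Hist h n) : Prop := ∃ R : ℝ, LipBdd R φ

/-- V(φ₀; δ, R) = { φ : ‖φ-φ₀‖ ≤ δ, lip φ ≤ R }. -/
def Vset {h : ℝ} {n : ℕ} (φ₀ : Hist h n) (δ R : ℝ) : Set (Hist h n) :=
  {φ | ‖φ - φ₀‖ ≤ δ ∧ LipBdd R φ}

/-- A functional f : 𝒟 ⊆ 𝒞 → E is almost locally Lipschitz. -/
def AlmostLocLip {h : ℝ} {n : ℕ} (𝒟 : Set (Hist h n)) {E : Type*} [NormedAddCommGroup E]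
    (f : Hist h n → E) : Prop :=
  ContinuousOn f 𝒟 ∧ ∀ φ₀ ∈ 𝒟, ∀ R : ℝ, 0 < R → ∃ δ : ℝ, 0 < δ ∧ ∃ k : ℝ, 0 ≤ k ∧
    ∀ φ ∈ Vset φ₀ δ R ∩ 𝒟, ∀ ψ ∈ Vset φ₀ δ R ∩ 𝒟, ‖f φ - f ψ‖ ≤ k * ‖φ - ψ‖

/-- Solution of x'(t) = f(x_t) (t₀ ≤ t ≤ t₀+α), x_{t₀} = φ, on the closed interval
[t₀-h, t₀+α], for a functional with domain 𝒟. -/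
def IsSolIcc {h : ℝ} {n : ℕ} (𝒟 : Set (Hist h n)) (f : Hist h n → Fin n → ℝ)
    (t₀ α : ℝ) (φ : Hist h n) (x : C(ℝ, Fin n → ℝ)) : Prop :=
  seg x t₀ = φ ∧ ∀ t ∈ Set.Icc t₀ (t₀ + α),
    seg (h := h) x t ∈ 𝒟 ∧ HasDerivAt (fun s => x s) (f (seg x t)) t

/-- Solution on the half-open interval [t₀-h, t₀+c), where c ∈ (0,∞]. -/
def IsSolIco {h : ℝ} {n : ℕ} (𝒟 : Set (Hist h n)) (f : Hist h n → Fin n → ℝ)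
    (t₀ : ℝ) (c : ℝ≥0∞) (φ : Hist h n) (x : C(ℝ, Fin n → ℝ)) : Prop :=
  seg x t₀ = φ ∧ ∀ t : ℝ, t₀ ≤ t → ENNReal.ofReal (t - t₀) < c →
    seg (h := h) x t ∈ 𝒟 ∧ HasDerivAt (fun s => x s) (f (seg x t)) t

/-- A non-continuable solution on [t₀-h, t₀+c): it admits no extension to a solution
on a strictly larger interval. -/
def Noncontinuable {h : ℝ} {n : ℕ} (𝒟 : Set (Hist h n)) (f : Hist h n → Fin n → ℝ)
    (t₀ : ℝ) (c : ℝ≥0∞) (φ : Hist h n) (x : C(ℝ, Fin n → ℝ)) : Prop :=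
  IsSolIco 𝒟 f t₀ c φ x ∧
    ¬ ∃ c' : ℝ≥0∞, c < c' ∧ ∃ x' : C(ℝ, Fin n → ℝ), IsSolIco 𝒟 f t₀ c' φ x' ∧
      ∀ t : ℝ, t₀ - h ≤ t → ENNReal.ofReal (t - t₀) < c → x' t = x t


/-- Lemma 2.6. If ρ : 𝒞 → 𝒟 is a locally Lipschitz retraction with
sup{ lip ρ(φ) : φ ∈ V(φ₀;δ,R) } < ∞ for all φ₀, δ, R, and f : 𝒟 → ℝⁿ is almost locally
Lipschitz, then so is F := f ∘ ρ : 𝒞 → ℝⁿ. -/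
theorem statement2 (h : ℝ) (hh : 0 < h) (n : ℕ) (hn : 1 ≤ n)
    (𝒟 : Set (Hist h n)) (ρ : Hist h n → Hist h n)
    (hρmem : ∀ φ, ρ φ ∈ 𝒟) (hρid : ∀ φ ∈ 𝒟, ρ φ = φ)
    (hρloc : LocallyLipschitz ρ)
    (hρlipbd : ∀ (φ₀ : Hist h n) (δ R : ℝ), 0 < δ → 0 < R →
      ∃ M : ℝ, ∀ φ ∈ Vset φ₀ δ R, LipBdd M (ρ φ))
    (f : Hist h n → Fin n → ℝ) (hf : AlmostLocLip 𝒟 f) :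
    AlmostLocLip Set.univ (f ∘ ρ) := by
  constructor
  · exact hf.1.comp hρloc.continuous.continuousOn (fun x _ => hρmem x)
  · intro φ₀ _ R hR
    obtain ⟨K, t, ht, hK⟩ := hρloc φ₀
    obtain ⟨δ₁, hδ₁, hball⟩ := Metric.mem_nhds_iff.mp ht
    obtain ⟨M, hM⟩ := hρlipbd φ₀ (δ₁ / 2) R (by linarith) hR
    have hR' : (0:ℝ) < |M| + 1 := by positivity
    obtain ⟨δ₂, hδ₂, k, hk, hest⟩ := hf.2 (ρ φ₀) (hρmem φ₀) (|M| + 1) hR'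
    refine ⟨min (δ₁ / 2) (δ₂ / ((K:ℝ) + 1)), lt_min (by linarith) (by positivity),
      k * K, mul_nonneg hk K.coe_nonneg, ?_⟩
    have key : ∀ φ ∈ Vset φ₀ (min (δ₁ / 2) (δ₂ / ((K:ℝ) + 1))) R ∩ (Set.univ : Set (Hist h n)),
        ρ φ ∈ Vset (ρ φ₀) δ₂ (|M| + 1) ∩ 𝒟 ∧ φ ∈ Metric.ball φ₀ δ₁ := by
      rintro φ ⟨⟨hφn, hφl⟩, -⟩
      have hφb : φ ∈ Metric.ball φ₀ δ₁ := by
        rw [Metric.mem_ball, dist_eq_norm]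
        calc ‖φ - φ₀‖ ≤ min (δ₁ / 2) (δ₂ / ((K:ℝ) + 1)) := hφn
          _ ≤ δ₁ / 2 := min_le_left _ _
          _ < δ₁ := by linarith
      refine ⟨⟨⟨?_, ?_⟩, hρmem φ⟩, hφb⟩
      · have h1 : dist (ρ φ) (ρ φ₀) ≤ K * dist φ φ₀ :=
          hK.dist_le_mul φ (hball hφb) φ₀ (hball (Metric.mem_ball_self hδ₁))
        rw [dist_eq_norm] at h1
        rw [← dist_eq_norm] at hφn
        have h2 : dist φ φ₀ ≤ δ₂ / ((K:ℝ) + 1) := le_trans hφn (min_le_right _ _)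
        have h3 : (K:ℝ) * (δ₂ / ((K:ℝ) + 1)) ≤ δ₂ := by
          rw [mul_div_assoc', div_le_iff₀ (by positivity : (0:ℝ) < (K:ℝ) + 1)]
          nlinarith [K.coe_nonneg, hδ₂.le]
        calc ‖ρ φ - ρ φ₀‖ ≤ K * dist φ φ₀ := h1
          _ ≤ K * (δ₂ / ((K:ℝ) + 1)) := mul_le_mul_of_nonneg_left h2 K.coe_nonneg
          _ ≤ δ₂ := h3
      · intro s t'
        have := hM φ ⟨le_trans hφn (min_le_left _ _), hφl⟩ s t'
        calc ‖ρ φ s - ρ φ t'‖ ≤ M * |s.1 - t'.1| := this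
          _ ≤ (|M| + 1) * |s.1 - t'.1| := by
              refine mul_le_mul_of_nonneg_right ?_ (abs_nonneg _)
              calc M ≤ |M| := le_abs_self M
                _ ≤ |M| + 1 := by linarith
    intro φ hφ ψ hψ
    obtain ⟨hφV, hφb⟩ := key φ hφ
    obtain ⟨hψV, hψb⟩ := key ψ hψ
    calc ‖(f ∘ ρ) φ - (f ∘ ρ) ψ‖ ≤ k * ‖ρ φ - ρ ψ‖ := hest _ hφV _ hψV
      _ ≤ k * ((K:ℝ) * ‖φ - ψ‖) := by
          refine mul_le_mul_of_nonneg_left ?_ hk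
          have := hK.dist_le_mul φ (hball hφb) ψ (hball hψb)
          rwa [dist_eq_norm, dist_eq_norm] at this
      _ = k * K * ‖φ - ψ‖ := by ring
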